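/- Let W be an elliptic curve over a field F given by a smooth Weierstrass equation with projective Weierstrass polynomial F_W ∈ F[X,Y,Z], let n' and l be positive integers (l ≥ 1), and let P_1, …, P_{3n'+l} be pairwise distinct points of W(F). If f ∈ F[X,Y,Z] is a nonzero homogeneous polynomial of degree n' that vanishes at all of the points P_1, …, P_{3n'+l}, then F_W divides f. -/

import Mathlib

open WeierstrassCurve WeierstrassCurve.Projective
open Polynomial
open scoped Polynomial.Bivariate

namespace ECAux

noncomputable section

variable {F : Type*} [Field F]

def aV (V : WeierstrassCurve.Affine F) : F[X] :=
  Polynomial.C V.a₁ * Polynomial.X + Polynomial.C V.a₃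

def sV (V : WeierstrassCurve.Affine F) : F[X] :=
  Polynomial.X ^ 3 + Polynomial.C V.a₂ * Polynomial.X ^ 2 + Polynomial.C V.a₄ * Polynomial.X
    + Polynomial.C V.a₆

lemma Vpoly_eq (V : WeierstrassCurve.Affine F) :
    V.polynomial = Y ^ 2 + Polynomial.C (aV V) * Y - Polynomial.C (sV V) := rfl

lemma natDegree_aV (V : WeierstrassCurve.Affine F) : (aV V).natDegree ≤ 1 := by
  unfold aV; compute_degree

lemma natDegree_sV (V : WeierstrassCurve.Affine F) : (sV V).natDegree ≤ 3 := by
  unfold sV; compute_degree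

/-- Reduction modulo the Weierstrass polynomial, controlling weighted degrees. -/
lemma red (V : WeierstrassCurve.Affine F) (m : ℕ) :
    ∀ d (h : F[X][Y]), h.natDegree ≤ d →
    (∀ j, h.coeff j ≠ 0 → 3 * j + 2 * (h.coeff j).natDegree ≤ m) →
    ∃ g p q, h = V.polynomial * g + Polynomial.C p + Polynomial.C q * Y ∧
      (p ≠ 0 → 2 * p.natDegree ≤ m) ∧ (q ≠ 0 → 2 * q.natDegree + 3 ≤ m) := by
  intro d
  induction d using Nat.strong_induction_on with
  | _ d ih =>
    intro h hdeg hwb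
    match d with
    | 0 =>
      refine ⟨0, h.coeff 0, 0, ?_, fun hp => ?_, fun hq => (hq rfl).elim⟩
      · conv_lhs => rw [Polynomial.eq_C_of_natDegree_le_zero hdeg]
        simp
      · simpa using hwb 0 hp
    | 1 =>
      refine ⟨0, h.coeff 0, h.coeff 1, ?_, fun hp => ?_, fun hq => ?_⟩
      · conv_lhs => rw [Polynomial.eq_X_add_C_of_natDegree_le_one hdeg]
        simp; ring
      · simpa using hwb 0 hp
      · have := hwb 1 hq; omega
    | (e + 2) =>
      by_cases hle : h.natDegree ≤ e + 1
      · exact ih (e + 1) (by omega) h hle hwb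
      have hd : h.natDegree = e + 2 := by omega
      have hne : h ≠ 0 := fun h0 => by simp [h0] at hd
      set c : F[X] := h.coeff (e + 2) with hc
      have hcne : c ≠ 0 := by
        have := Polynomial.leadingCoeff_ne_zero.mpr hne
        rwa [Polynomial.leadingCoeff, hd] at this
      have hcb : 3 * (e + 2) + 2 * c.natDegree ≤ m := hwb (e + 2) hcne
      set t : F[X][Y] := Polynomial.C c * Y ^ (e + 2) + Polynomial.C (c * aV V) * Y ^ (e + 1)
        - Polynomial.C (c * sV V) * Y ^ e with ht
      have hteq : Polynomial.C c * Y ^ e * V.polynomial = t := by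
        rw [Vpoly_eq, ht]; push_cast [map_mul]; ring
      set h' : F[X][Y] := h - Polynomial.C c * Y ^ e * V.polynomial with hh'
      have hco : ∀ j, h'.coeff j = h.coeff j
          - ((if e + 2 = j then c else 0) + (if e + 1 = j then c * aV V else 0)
            - (if e = j then c * sV V else 0)) := by
        intro j
        rw [hh', hteq, ht]
        simp only [Polynomial.coeff_sub, Polynomial.coeff_add, Polynomial.C_mul_X_pow_eq_monomial,
          Polynomial.coeff_monomial]
      have hd' : h'.natDegree ≤ e + 1 := by
        refine Polynomial.natDegree_le_iff_coeff_eq_zero.mpr fun j hj => ?_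
        rw [hco j]
        rcases eq_or_lt_of_le (Nat.succ_le_of_lt hj) with hj2 | hj2
        · have hj2' : j = e + 2 := by omega
          subst hj2'
          rw [if_pos rfl, if_neg (by omega), if_neg (by omega)]
          simp [hc]
        · have h1 : h.coeff j = 0 := Polynomial.coeff_eq_zero_of_natDegree_lt (by omega)
          rw [h1, if_neg (by omega), if_neg (by omega), if_neg (by omega)]; ring
      have hwb' : ∀ j, h'.coeff j ≠ 0 → 3 * j + 2 * (h'.coeff j).natDegree ≤ m := by
        intro j hj
        have hb1 : (c * aV V).natDegree ≤ c.natDegree + 1 :=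
          le_trans (Polynomial.natDegree_mul_le) (by have := natDegree_aV V; omega)
        have hb2 : (c * sV V).natDegree ≤ c.natDegree + 3 :=
          le_trans (Polynomial.natDegree_mul_le) (by have := natDegree_sV V; omega)
        have hj3 : 3 * j ≤ m := by
          by_contra hj3
          have h1 : h.coeff j = 0 := by
            by_contra h1; exact hj3 (by have := hwb j h1; omega)
          have h2 : h'.coeff j = 0 := by
            rw [hco j, h1, if_neg (by omega), if_neg (by omega), if_neg (by omega)]
            ring
          exact hj h2
        set B : ℕ := (m - 3 * j) / 2 with hB
        have hA : (h.coeff j).natDegree ≤ B := by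
          by_cases h0 : h.coeff j = 0
          · simp [h0]
          · have := hwb j h0; omega
        have h1 : (if e + 2 = j then c else 0).natDegree ≤ B := by
          split_ifs with hif
          · omega
          · simp
        have h2 : (if e + 1 = j then c * aV V else 0).natDegree ≤ B := by
          split_ifs with hif
          · omega
          · simp
        have h3 : (if e = j then c * sV V else 0).natDegree ≤ B := by
          split_ifs with hif
          · omega
          · simp
        have h4 : (h'.coeff j).natDegree ≤ B := by
          rw [hco j]
          exact le_trans (Polynomial.natDegree_sub_le _ _) (max_le hA
            (le_trans (Polynomial.natDegree_sub_le _ _) (max_le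
              (le_trans (Polynomial.natDegree_add_le _ _) (max_le h1 h2)) h3)))
        omega
      obtain ⟨g, p, q, hrep, hp, hq⟩ := ih (e + 1) (by omega) h' hd' hwb'
      refine ⟨g + Polynomial.C c * Y ^ e, p, q, ?_, hp, hq⟩
      have : h = h' + Polynomial.C c * Y ^ e * V.polynomial := by rw [hh']; ring
      rw [this, hrep]; ring


lemma N_ne_zero (V : WeierstrassCurve.Affine F) (p q : F[X]) (hpq : ¬(p = 0 ∧ q = 0)) :
    p ^ 2 - p * q * aV V - q ^ 2 * sV V ≠ 0 := by
  intro hN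
  by_cases hq : q = 0
  · subst hq
    simp only [mul_zero, zero_mul, zero_pow, sub_zero, ne_eq, OfNat.ofNat_ne_zero,
      not_false_eq_true] at hN
    exact hpq ⟨by simpa [pow_eq_zero_iff] using hN, rfl⟩
  · have idty : (Polynomial.C p + Polynomial.C q * Y) *
        (Polynomial.C (p - q * aV V) - Polynomial.C q * Y) =
        Polynomial.C (p ^ 2 - p * q * aV V - q ^ 2 * sV V)
          - Polynomial.C (q ^ 2) * V.polynomial := by
      rw [Vpoly_eq]; push_cast [map_mul, map_sub, map_add, map_pow]; ring
    rw [hN, map_zero, zero_sub] at idty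
    have hprime : Prime V.polynomial :=
      UniqueFactorizationMonoid.irreducible_iff_prime.mp V.irreducible_polynomial
    have hdvd : V.polynomial ∣ (Polynomial.C p + Polynomial.C q * Y) *
        (Polynomial.C (p - q * aV V) - Polynomial.C q * Y) :=
      ⟨-Polynomial.C (q ^ 2), by rw [idty]; ring⟩
    have hVdeg : V.polynomial.natDegree = 2 := V.natDegree_polynomial
    rcases hprime.2.2 _ _ hdvd with hd | hd
    · have hne : Polynomial.C p + Polynomial.C q * Y ≠ 0 := by
        intro h0
        have : (Polynomial.C p + Polynomial.C q * Y).coeff 1 = q := by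
          simp [Polynomial.coeff_C]
        rw [h0] at this; simp at this; exact hq this.symm
      have h1 := Polynomial.natDegree_le_of_dvd hd hne
      have h2 : (Polynomial.C p + Polynomial.C q * Y).natDegree ≤ 1 := by
        compute_degree
      omega
    · have hne : Polynomial.C (p - q * aV V) - Polynomial.C q * Y ≠ 0 := by
        intro h0
        have : (Polynomial.C (p - q * aV V) - Polynomial.C q * Y).coeff 1 = -q := by
          simp [Polynomial.coeff_C]
        rw [h0] at this; simp at this; exact hq this
      have h1 := Polynomial.natDegree_le_of_dvd hd hne
      have h2 : (Polynomial.C (p - q * aV V) - Polynomial.C q * Y).natDegree ≤ 1 := by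
        compute_degree
      omega

lemma N_deg (V : WeierstrassCurve.Affine F) (p q : F[X]) (m : ℕ)
    (hp : p ≠ 0 → 2 * p.natDegree ≤ m) (hq : q ≠ 0 → 2 * q.natDegree + 3 ≤ m) :
    (p ^ 2 - p * q * aV V - q ^ 2 * sV V).natDegree ≤ m := by
  have e1 : (p ^ 2).natDegree ≤ m := by
    by_cases h0 : p = 0
    · simp [h0]
    · exact le_trans (Polynomial.natDegree_pow_le) (by have := hp h0; omega)
  have e2 : (p * q * aV V).natDegree ≤ m := by
    by_cases h0 : p = 0
    · simp [h0]
    by_cases h1 : q = 0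
    · simp [h1]
    have := hp h0; have := hq h1; have := natDegree_aV V
    calc (p * q * aV V).natDegree ≤ (p * q).natDegree + (aV V).natDegree :=
          Polynomial.natDegree_mul_le
      _ ≤ p.natDegree + q.natDegree + (aV V).natDegree := by
          have := Polynomial.natDegree_mul_le (p := p) (q := q); omega
      _ ≤ m := by omega
  have e3 : (q ^ 2 * sV V).natDegree ≤ m := by
    by_cases h1 : q = 0
    · simp [h1]
    have := hq h1; have := natDegree_sV V
    calc (q ^ 2 * sV V).natDegree ≤ (q ^ 2).natDegree + (sV V).natDegree :=
          Polynomial.natDegree_mul_le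
      _ ≤ 2 * q.natDegree + (sV V).natDegree := by
          have := Polynomial.natDegree_pow_le (p := q) (n := 2); omega
      _ ≤ m := by omega
  exact le_trans (Polynomial.natDegree_sub_le _ _) (max_le
    (le_trans (Polynomial.natDegree_sub_le _ _) (max_le e1 e2)) e3)

lemma counting (V : WeierstrassCurve.Affine F) (m : ℕ) (p q : F[X]) (hpq : ¬(p = 0 ∧ q = 0))
    (hp : p ≠ 0 → 2 * p.natDegree ≤ m) (hq : q ≠ 0 → 2 * q.natDegree + 3 ≤ m)
    (S : Finset (F × F))
    (hS : ∀ r ∈ S, V.Equation r.1 r.2 ∧ p.eval r.1 + q.eval r.1 * r.2 = 0) :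
    S.card ≤ m := by
  classical
  set N : F[X] := p ^ 2 - p * q * aV V - q ^ 2 * sV V with hNdef
  have hN0 : N ≠ 0 := N_ne_zero V p q hpq
  have hNdeg : N.natDegree ≤ m := N_deg V p q m hp hq
  set T : Finset F := S.image Prod.fst with hT
  have heq : ∀ r ∈ S, r.2 ^ 2 + (aV V).eval r.1 * r.2 - (sV V).eval r.1 = 0 := by
    intro r hr
    have hE : V.polynomial.evalEval r.1 r.2 = 0 := (hS r hr).1
    rw [Vpoly_eq] at hE
    simpa [Polynomial.evalEval, aV, sV] using hE
  have hroot : ∀ x ∈ T, N.eval x = 0 := by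
    intro x hx
    obtain ⟨r, hr, hrx⟩ := Finset.mem_image.mp hx
    have hL := (hS r hr).2
    have hE := heq r hr
    subst hrx
    simp only [hNdef, Polynomial.eval_sub, Polynomial.eval_mul, Polynomial.eval_pow]
    linear_combination (q.eval r.1) ^ 2 * hE +
      (p.eval r.1 - q.eval r.1 * (aV V).eval r.1 - q.eval r.1 * r.2) * hL
  have hfib : ∀ x ∈ T, (S.filter (fun r => r.1 = x)).card ≤ N.roots.count x := by
    intro x hx
    have hmem : x ∈ N.roots := (Polynomial.mem_roots' ).mpr ⟨hN0, hroot x hx⟩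
    by_cases h2 : 2 ≤ (S.filter (fun r => r.1 = x)).card
    · obtain ⟨r1, hr1, r2, hr2, hne⟩ := Finset.one_lt_card.mp h2
      obtain ⟨hr1S, hr1x⟩ := Finset.mem_filter.mp hr1
      obtain ⟨hr2S, hr2x⟩ := Finset.mem_filter.mp hr2
      have hyne : r1.2 ≠ r2.2 := by
        intro hy; exact hne (Prod.ext (hr1x.trans hr2x.symm) hy)
      have hL1 := (hS r1 hr1S).2
      have hL2 := (hS r2 hr2S).2
      rw [hr1x] at hL1; rw [hr2x] at hL2
      have hq0 : q.eval x = 0 := by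
        have : q.eval x * (r1.2 - r2.2) = 0 := by linear_combination hL1 - hL2
        rcases mul_eq_zero.mp this with h | h
        · exact h
        · exact absurd (sub_eq_zero.mp h) hyne
      have hp0 : p.eval x = 0 := by linear_combination hL1 - r1.2 * hq0
      obtain ⟨p1, hp1⟩ := (Polynomial.dvd_iff_isRoot.mpr hp0 :
        Polynomial.X - Polynomial.C x ∣ p)
      obtain ⟨q1, hq1⟩ := (Polynomial.dvd_iff_isRoot.mpr hq0 :
        Polynomial.X - Polynomial.C x ∣ q)
      have hdvd2 : (Polynomial.X - Polynomial.C x) ^ 2 ∣ N :=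
        ⟨p1 ^ 2 - p1 * q1 * aV V - q1 ^ 2 * sV V, by rw [hNdef, hp1, hq1]; ring⟩
      have hcount : 2 ≤ N.roots.count x := by
        rw [Polynomial.count_roots]
        exact (Polynomial.le_rootMultiplicity_iff hN0).mpr hdvd2
      have hcard2 : (S.filter (fun r => r.1 = x)).card ≤ 2 := by
        set Q : F[X] := Polynomial.X ^ 2 + Polynomial.C ((aV V).eval x) * Polynomial.X
          - Polynomial.C ((sV V).eval x) with hQ
        have hQdeg : Q.natDegree = 2 := by rw [hQ]; compute_degree!
        have hQ0 : Q ≠ 0 := fun h0 => by simp [h0] at hQdeg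
        have himg : (S.filter (fun r => r.1 = x)).image Prod.snd ⊆ Q.roots.toFinset := by
          intro b hb
          obtain ⟨r, hr, hrb⟩ := Finset.mem_image.mp hb
          obtain ⟨hrS, hrx⟩ := Finset.mem_filter.mp hr
          have hE := heq r hrS
          rw [hrx] at hE
          rw [Multiset.mem_toFinset]
          refine (Polynomial.mem_roots').mpr ⟨hQ0, ?_⟩
          rw [hQ]
          simp only [Polynomial.IsRoot, Polynomial.eval_sub, Polynomial.eval_add, Polynomial.eval_mul,
            Polynomial.eval_pow, Polynomial.eval_X, Polynomial.eval_C]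
          rw [← hrb]; linear_combination hE
        have hinj : Set.InjOn Prod.snd ((S.filter (fun r => r.1 = x) : Finset (F × F)) : Set (F × F)) := by
          intro a ha b hb hab
          obtain ⟨_, hax⟩ := Finset.mem_filter.mp (Finset.mem_coe.mp ha)
          obtain ⟨_, hbx⟩ := Finset.mem_filter.mp (Finset.mem_coe.mp hb)
          exact Prod.ext (hax.trans hbx.symm) hab
        calc (S.filter (fun r => r.1 = x)).card
            = ((S.filter (fun r => r.1 = x)).image Prod.snd).card :=
              (Finset.card_image_of_injOn hinj).symm
          _ ≤ Q.roots.toFinset.card := Finset.card_le_card himg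
          _ ≤ Multiset.card Q.roots := Q.roots.toFinset_card_le
          _ ≤ Q.natDegree := Q.card_roots'
          _ = 2 := hQdeg
      omega
    · have : 1 ≤ N.roots.count x := Multiset.one_le_count_iff_mem.mpr hmem
      omega
  have hsub : T ⊆ N.roots.toFinset := by
    intro x hx
    obtain ⟨r, hr, hrx⟩ := Finset.mem_image.mp hx
    rw [Multiset.mem_toFinset]
    exact (Polynomial.mem_roots' ).mpr ⟨hN0, hroot x hx⟩
  calc S.card = ∑ x ∈ T, (S.filter (fun r => r.1 = x)).card :=
        Finset.card_eq_sum_card_fiberwise (fun r hr => Finset.mem_image_of_mem _ hr)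
    _ ≤ ∑ x ∈ T, N.roots.count x := Finset.sum_le_sum hfib
    _ ≤ ∑ x ∈ N.roots.toFinset, N.roots.count x :=
        Finset.sum_le_sum_of_subset hsub
    _ = Multiset.card N.roots := Multiset.toFinset_sum_count_eq _
    _ ≤ N.natDegree := N.card_roots'
    _ ≤ m := hNdeg

lemma core (V : WeierstrassCurve.Affine F) (m : ℕ) (h : F[X][Y])
    (hwb : ∀ j, h.coeff j ≠ 0 → 3 * j + 2 * (h.coeff j).natDegree ≤ m)
    (S : Finset (F × F))
    (hS : ∀ r ∈ S, V.Equation r.1 r.2 ∧ h.evalEval r.1 r.2 = 0)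
    (hcard : m < S.card) : V.polynomial ∣ h := by
  obtain ⟨g, p, q, hrep, hp, hq⟩ := red V m h.natDegree h le_rfl hwb
  by_cases hpq : p = 0 ∧ q = 0
  · rw [hrep, hpq.1, hpq.2]; simp
  · exfalso
    have hS' : ∀ r ∈ S, V.Equation r.1 r.2 ∧ p.eval r.1 + q.eval r.1 * r.2 = 0 := by
      intro r hr
      refine ⟨(hS r hr).1, ?_⟩
      have h0 := (hS r hr).2
      have hE : V.polynomial.evalEval r.1 r.2 = 0 := (hS r hr).1
      rw [hrep] at h0
      simp only [Polynomial.evalEval, Polynomial.eval_add, Polynomial.eval_mul,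
        Polynomial.eval_C, Polynomial.eval_X] at h0 hE
      rw [hE] at h0
      simpa using h0
    exact absurd (counting V m p q hpq hp hq S hS') (by omega)


def phi : MvPolynomial (Fin 3) F →ₐ[F] F[X][Y] :=
  MvPolynomial.aeval ![Polynomial.C Polynomial.X, Polynomial.X, 1]

lemma phi_monomial (d : Fin 3 →₀ ℕ) (c : F) :
    phi (MvPolynomial.monomial d c) =
      Polynomial.C (Polynomial.C c * Polynomial.X ^ d 0) * Polynomial.X ^ d 1 := by
  simp only [phi, MvPolynomial.aeval_monomial]
  rw [Finsupp.prod_fintype _ _ (fun i => pow_zero _), Fin.prod_univ_three]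
  simp only [Matrix.cons_val_zero, Matrix.cons_val_one, Matrix.head_cons, Matrix.cons_val_two,
    Matrix.tail_cons, one_pow, mul_one]
  rw [← Polynomial.C_pow]
  simp only [Polynomial.algebraMap_apply, Polynomial.C_mul, Algebra.algebraMap_self_apply]
  ring

lemma phi_coeffY (g : MvPolynomial (Fin 3) F) (j : ℕ) :
    (phi g).coeff j = ∑ d ∈ g.support,
      (if d 1 = j then Polynomial.C (MvPolynomial.coeff d g) * Polynomial.X ^ d 0 else 0) := by
  conv_lhs => rw [g.as_sum, map_sum, Polynomial.finset_sum_coeff]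
  refine Finset.sum_congr rfl fun d hd => ?_
  rw [phi_monomial, Polynomial.C_mul_X_pow_eq_monomial, Polynomial.coeff_monomial]

lemma eval_phi (g : MvPolynomial (Fin 3) F) (a b : F) :
    (phi g).evalEval a b = MvPolynomial.eval ![a, b, 1] g := by
  induction g using MvPolynomial.induction_on with
  | C c => simp [phi, Polynomial.evalEval, Polynomial.algebraMap_apply]
  | add p q hp hq => rw [map_add, Polynomial.evalEval_add, hp, hq, map_add]
  | mul_X p i hp =>
    rw [map_mul, map_mul]
    have hX : (phi (MvPolynomial.X i : MvPolynomial (Fin 3) F)).evalEval a b =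
        MvPolynomial.eval ![a, b, 1] (MvPolynomial.X i) := by
      fin_cases i <;>
        simp [phi, Polynomial.evalEval]
    calc (phi p * phi (MvPolynomial.X i)).evalEval a b
        = (phi p).evalEval a b * (phi (MvPolynomial.X i)).evalEval a b := by
          simp [Polynomial.evalEval]
      _ = _ := by rw [hp, hX]

lemma wb_phi (g : MvPolynomial (Fin 3) F) (m : ℕ)
    (hm : ∀ d ∈ g.support, 2 * d 0 + 3 * d 1 ≤ m) :
    ∀ j, (phi g).coeff j ≠ 0 → 3 * j + 2 * ((phi g).coeff j).natDegree ≤ m := by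
  intro j hne
  have hje : ∃ d ∈ g.support, d 1 = j := by
    by_contra hcon
    push_neg at hcon
    apply hne
    rw [phi_coeffY]
    exact Finset.sum_eq_zero fun d hd => if_neg (hcon d hd)
  obtain ⟨d0, hd0, hd0j⟩ := hje
  have hj3 : 3 * j ≤ m := by have := hm d0 hd0; omega
  have hbound : ((phi g).coeff j).natDegree ≤ (m - 3 * j) / 2 := by
    rw [phi_coeffY]
    refine Polynomial.natDegree_sum_le_of_forall_le _ _ fun d hd => ?_
    split_ifs with hif
    · refine le_trans (Polynomial.natDegree_C_mul_le _ _) ?_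
      rw [Polynomial.natDegree_X_pow]
      have := hm d hd; omega
    · simp
  omega

lemma coeff_phi_natDegree (g : MvPolynomial (Fin 3) F) (k : ℕ)
    (hg : MvPolynomial.degreeOf 0 g ≤ k) (j : ℕ) : ((phi g).coeff j).natDegree ≤ k := by
  rw [phi_coeffY]
  refine Polynomial.natDegree_sum_le_of_forall_le _ _ fun d hd => ?_
  split_ifs with hif
  · refine le_trans (Polynomial.natDegree_C_mul_le _ _) ?_
    rw [Polynomial.natDegree_X_pow]
    exact le_trans (MvPolynomial.degreeOf_le_iff.mp hg d hd) le_rfl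
  · simp

lemma deg3 (d : Fin 3 →₀ ℕ) : d.degree = d 0 + d 1 + d 2 := by
  rw [Finsupp.degree_apply, Finset.sum_subset (Finset.subset_univ d.support)
    (fun i _ hi => Finsupp.notMem_support_iff.mp hi), Fin.sum_univ_three]

lemma support_degree_eq {g : MvPolynomial (Fin 3) F} {n : ℕ} (hg : g.IsHomogeneous n)
    {d : Fin 3 →₀ ℕ} (hd : d ∈ g.support) : d 0 + d 1 + d 2 = n := by
  rw [← deg3]
  rw [Finsupp.degree_eq_weight_one]
  exact hg (MvPolynomial.mem_support_iff.mp hd)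

lemma phi_inj_homog {g : MvPolynomial (Fin 3) F} {n : ℕ} (hg : g.IsHomogeneous n)
    (h0 : phi g = 0) : g = 0 := by
  classical
  ext s
  rw [MvPolynomial.coeff_zero]
  by_contra hs
  have hsd : s 0 + s 1 + s 2 = n :=
    support_degree_eq hg (MvPolynomial.mem_support_iff.mpr hs)
  have hco : ((phi g).coeff (s 1)).coeff (s 0) = MvPolynomial.coeff s g := by
    rw [phi_coeffY, Polynomial.finset_sum_coeff]
    have hterm : ∀ d ∈ g.support,
        (if d 1 = s 1 then Polynomial.C (MvPolynomial.coeff d g) * Polynomial.X ^ d 0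
          else 0).coeff (s 0) = if d = s then MvPolynomial.coeff d g else 0 := by
      intro d hd
      by_cases h2 : d = s
      · subst h2
        rw [if_pos rfl, if_pos rfl, Polynomial.C_mul_X_pow_eq_monomial,
          Polynomial.coeff_monomial, if_pos rfl]
      · rw [if_neg h2]
        by_cases h1 : d 1 = s 1
        · rw [if_pos h1, Polynomial.C_mul_X_pow_eq_monomial, Polynomial.coeff_monomial, if_neg]
          intro hds
          apply h2
          have hdd : d 0 + d 1 + d 2 = n := support_degree_eq hg hd
          ext i
          fin_cases i
          · exact hds
          · exact h1
          · show d 2 = s 2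
            omega
        · rw [if_neg h1, Polynomial.coeff_zero]
    rw [Finset.sum_congr rfl hterm, Finset.sum_ite_eq' g.support s
      (fun d => MvPolynomial.coeff d g)]
    rw [if_pos (MvPolynomial.mem_support_iff.mpr hs)]
  rw [h0] at hco
  simp at hco
  exact hs hco.symm

lemma coeff_single_eq_eval {g : MvPolynomial (Fin 3) F} {n : ℕ} (hg : g.IsHomogeneous n)
    (h0 : MvPolynomial.eval ![(0 : F), 1, 0] g = 0) :
    MvPolynomial.coeff (Finsupp.single 1 n) g = 0 := by
  classical
  rw [MvPolynomial.eval_eq'] at h0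
  have hterm : ∀ d ∈ g.support,
      MvPolynomial.coeff d g * ∏ i, (![(0 : F), 1, 0]) i ^ d i =
        if d = Finsupp.single 1 n then MvPolynomial.coeff d g else 0 := by
    intro d hd
    rw [Fin.prod_univ_three]
    simp only [Matrix.cons_val_zero, Matrix.cons_val_one, Matrix.head_cons, Matrix.cons_val_two,
      Matrix.tail_cons, one_pow]
    split_ifs with h1
    · subst h1
      simp [Finsupp.single_apply]
    · have hdd : d 0 + d 1 + d 2 = n := support_degree_eq hg hd
      have : d 0 ≠ 0 ∨ d 2 ≠ 0 := by
        by_contra hcon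
        push_neg at hcon
        apply h1
        ext i
        fin_cases i
        · simp [hcon.1, Finsupp.single_apply]
        · simp only [Finsupp.single_apply]; norm_num; omega
        · simp [hcon.2, Finsupp.single_apply]
      rcases this with h | h
      · rw [zero_pow h]; ring
      · rw [zero_pow h]; ring
  have h0' := (Finset.sum_congr rfl hterm).symm.trans h0
  rw [Finset.sum_ite_eq' g.support (Finsupp.single 1 n)
    (fun d => MvPolynomial.coeff d g)] at h0'
  by_cases hmem : Finsupp.single 1 n ∈ g.support
  · rwa [if_pos hmem] at h0'
  · exact MvPolynomial.notMem_support_iff.mp hmem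


lemma natDegree_sV_eq (V : WeierstrassCurve.Affine F) : (sV V).natDegree = 3 := by
  unfold sV; compute_degree!

lemma sV_ne_zero (V : WeierstrassCurve.Affine F) : sV V ≠ 0 := fun h => by
  have := natDegree_sV_eq V; rw [h] at this; simp at this

lemma hc_mul {u v : MvPolynomial (Fin 3) F} {k : ℕ} (hu : u.IsHomogeneous k) (n : ℕ) :
    MvPolynomial.homogeneousComponent (k + n) (u * v) =
      u * MvPolynomial.homogeneousComponent n v := by
  classical
  conv_lhs => rw [← MvPolynomial.sum_homogeneousComponent v]
  rw [Finset.mul_sum, map_sum]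
  have hterm : ∀ i ∈ Finset.range (v.totalDegree + 1),
      MvPolynomial.homogeneousComponent (k + n) (u * MvPolynomial.homogeneousComponent i v) =
        if n = i then u * MvPolynomial.homogeneousComponent i v else 0 := by
    intro i _
    have hmem : u * MvPolynomial.homogeneousComponent i v ∈
        MvPolynomial.homogeneousSubmodule (Fin 3) F (k + i) :=
      (MvPolynomial.mem_homogeneousSubmodule _ _).mpr
        (hu.mul (MvPolynomial.homogeneousComponent_isHomogeneous i v))
    rw [MvPolynomial.homogeneousComponent_of_mem hmem]
    congr 1
    simp only [eq_iff_iff]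
    omega
  rw [Finset.sum_congr rfl hterm, Finset.sum_ite_eq _ _
    (fun i => u * MvPolynomial.homogeneousComponent i v)]
  split_ifs with hmem
  · rfl
  · rw [Finset.mem_range, not_lt] at hmem
    rw [MvPolynomial.homogeneousComponent_eq_zero _ _ (by omega), mul_zero]

lemma hc_mul_lt {u v : MvPolynomial (Fin 3) F} {k n : ℕ} (hu : u.IsHomogeneous k) (hn : n < k) :
    MvPolynomial.homogeneousComponent n (u * v) = 0 := by
  classical
  conv_lhs => rw [← MvPolynomial.sum_homogeneousComponent v]
  rw [Finset.mul_sum, map_sum]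
  refine Finset.sum_eq_zero fun i _ => ?_
  have hmem : u * MvPolynomial.homogeneousComponent i v ∈
      MvPolynomial.homogeneousSubmodule (Fin 3) F (k + i) :=
    (MvPolynomial.mem_homogeneousSubmodule _ _).mpr
      (hu.mul (MvPolynomial.homogeneousComponent_isHomogeneous i v))
  rw [MvPolynomial.homogeneousComponent_of_mem hmem, if_neg (by omega)]

lemma bounded_factor_zero (V : WeierstrassCurve.Affine F) (u : F[X][Y])
    (hb : ∀ j, ((V.polynomial * u).coeff j).natDegree ≤ 2) : u = 0 := by
  by_contra hu
  set D : ℕ := u.support.sup (fun j => (u.coeff j).natDegree) with hD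
  have hsupp : u.support.Nonempty := Polynomial.nonempty_support_iff.mpr hu
  obtain ⟨j0, hj0mem, hj0⟩ :=
    Finset.exists_mem_eq_sup _ hsupp (fun j => (u.coeff j).natDegree)
  have hj0ne : u.coeff j0 ≠ 0 := Polynomial.mem_support_iff.mp hj0mem
  have hcoe : ∀ j, (u.coeff j).natDegree ≤ D := by
    intro j
    by_cases h0 : u.coeff j = 0
    · simp [h0]
    · exact Finset.le_sup (f := fun j => (u.coeff j).natDegree)
        (Polynomial.mem_support_iff.mpr h0)
  have hprod : V.polynomial * u =
      u * Polynomial.X ^ 2 + (Polynomial.C (aV V) * u) * Polynomial.X ^ 1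
        - Polynomial.C (sV V) * u := by
    rw [Vpoly_eq]; ring
  have hco : (V.polynomial * u).coeff j0 =
      (if 2 ≤ j0 then u.coeff (j0 - 2) else 0)
        + (if 1 ≤ j0 then aV V * u.coeff (j0 - 1) else 0)
        - sV V * u.coeff j0 := by
    rw [hprod, Polynomial.coeff_sub, Polynomial.coeff_add, Polynomial.coeff_mul_X_pow',
      Polynomial.coeff_mul_X_pow', Polynomial.coeff_C_mul, Polynomial.coeff_C_mul]
  have h1 : (if 2 ≤ j0 then u.coeff (j0 - 2) else 0).natDegree ≤ D := by
    split_ifs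
    · exact hcoe _
    · simp
  have h2 : (if 1 ≤ j0 then aV V * u.coeff (j0 - 1) else 0).natDegree ≤ D + 1 := by
    split_ifs
    · exact le_trans Polynomial.natDegree_mul_le (by have := natDegree_aV V; have := hcoe (j0-1); omega)
    · simp
  have hj0' : (u.coeff j0).natDegree = D := by rw [hD, hj0]
  have h3 : (sV V * u.coeff j0).natDegree = 3 + D := by
    rw [Polynomial.natDegree_mul (sV_ne_zero V) hj0ne, natDegree_sV_eq, hj0']
  have hlt : ((if 2 ≤ j0 then u.coeff (j0 - 2) else 0)
      + (if 1 ≤ j0 then aV V * u.coeff (j0 - 1) else 0)).natDegree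
        < (sV V * u.coeff j0).natDegree := by
    have := Polynomial.natDegree_add_le (if 2 ≤ j0 then u.coeff (j0 - 2) else 0)
      (if 1 ≤ j0 then aV V * u.coeff (j0 - 1) else 0)
    omega
  have hDeq := Polynomial.natDegree_sub_eq_right_of_natDegree_lt hlt
  have := hb j0
  rw [hco, hDeq, h3] at this
  omega

lemma Wpoly_homog (W : WeierstrassCurve.Projective F) : W.polynomial.IsHomogeneous 3 := by
  have hX0 := MvPolynomial.isHomogeneous_X F (0 : Fin 3)
  have hX1 := MvPolynomial.isHomogeneous_X F (1 : Fin 3)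
  have hX2 := MvPolynomial.isHomogeneous_X F (2 : Fin 3)
  rw [WeierstrassCurve.Projective.polynomial]
  apply MvPolynomial.IsHomogeneous.sub
  · apply MvPolynomial.IsHomogeneous.add
    apply MvPolynomial.IsHomogeneous.add
    · have := (hX1.pow 2).mul hX2
      norm_num at this
      exact this
    · have := (((MvPolynomial.isHomogeneous_C _ W.a₁).mul hX0).mul hX1).mul hX2
      norm_num at this
      exact this
    · have := ((MvPolynomial.isHomogeneous_C _ W.a₃).mul hX1).mul (hX2.pow 2)
      norm_num at this
      exact this
  · apply MvPolynomial.IsHomogeneous.add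
    apply MvPolynomial.IsHomogeneous.add
    apply MvPolynomial.IsHomogeneous.add
    · have := hX0.pow 3
      norm_num at this
      exact this
    · have := ((MvPolynomial.isHomogeneous_C _ W.a₂).mul (hX0.pow 2)).mul hX2
      norm_num at this
      exact this
    · have := ((MvPolynomial.isHomogeneous_C _ W.a₄).mul hX0).mul (hX2.pow 2)
      norm_num at this
      exact this
    · have := (MvPolynomial.isHomogeneous_C _ W.a₆).mul (hX2.pow 3)
      norm_num at this
      exact this

end

end ECAux


open ECAux in
/-- Let `W` be an elliptic curve over a field `F` with projective Weierstrass polynomial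
`F_W`, let `n', l ≥ 1`, and let `P_1, …, P_{3n'+l}` be pairwise distinct points of `W(F)`.
If `f` is a nonzero homogeneous polynomial of degree `n'` vanishing at all of the points
`P_1, …, P_{3n'+l}`, then `F_W` divides `f`. -/
theorem weierstrass_dvd_of_vanishing_at_many_points
    (F : Type*) [Field F] (W : WeierstrassCurve.Projective F) [W.IsElliptic]
    (n' l : ℕ) (hn' : 0 < n') (hl : 1 ≤ l)
    (P : Fin (3 * n' + l) → W.Point) (hP : Function.Injective P)
    (f : MvPolynomial (Fin 3) F) (hf0 : f ≠ 0) (hf : f.IsHomogeneous n')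
    (hvan : ∀ i, ∀ x : Fin 3 → F, (P i).point = ⟦x⟧ → MvPolynomial.eval x f = 0) :
    W.polynomial ∣ f := by
  classical
  set V : WeierstrassCurve.Affine F := W.toAffine with hV
  -- divide by W.polynomial in the X₀ variable
  set M : Polynomial (MvPolynomial (Fin 2) F) :=
    -((MvPolynomial.finSuccEquiv F 2) W.polynomial) with hMdef
  have hCC : ∀ a : F, (MvPolynomial.finSuccEquiv F 2) (MvPolynomial.C a)
      = Polynomial.C (MvPolynomial.C a) := fun a => by
    simp [MvPolynomial.finSuccEquiv_apply]
  have hM : M = Polynomial.X ^ 3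
      + Polynomial.C (MvPolynomial.C W.a₂ * MvPolynomial.X 1) * Polynomial.X ^ 2
      + Polynomial.C (MvPolynomial.C W.a₄ * MvPolynomial.X 1 ^ 2
          - MvPolynomial.C W.a₁ * MvPolynomial.X 0 * MvPolynomial.X 1) * Polynomial.X
      + Polynomial.C (MvPolynomial.C W.a₆ * MvPolynomial.X 1 ^ 3
          - MvPolynomial.X 0 ^ 2 * MvPolynomial.X 1
          - MvPolynomial.C W.a₃ * MvPolynomial.X 0 * MvPolynomial.X 1 ^ 2) := by
    rw [hMdef, WeierstrassCurve.Projective.polynomial]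
    have e1 : (MvPolynomial.X (1 : Fin 3) : MvPolynomial (Fin 3) F)
        = MvPolynomial.X (Fin.succ 0) := rfl
    have e2 : (MvPolynomial.X (2 : Fin 3) : MvPolynomial (Fin 3) F)
        = MvPolynomial.X (Fin.succ 1) := rfl
    rw [e1, e2]
    simp only [map_sub, map_add, map_mul, map_pow, MvPolynomial.finSuccEquiv_X_zero,
      MvPolynomial.finSuccEquiv_X_succ, hCC]
    ring
  have hMonic : M.Monic := by
    rw [hM]; monicity!
  have hMdeg : M.degree = 3 := by
    rw [hM]; compute_degree!
  set r0 : Polynomial (MvPolynomial (Fin 2) F) :=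
    ((MvPolynomial.finSuccEquiv F 2) f) %ₘ M with hr0
  set q0 : Polynomial (MvPolynomial (Fin 2) F) :=
    ((MvPolynomial.finSuccEquiv F 2) f) /ₘ M with hq0
  have hdiv : (MvPolynomial.finSuccEquiv F 2) f = M * q0 + r0 := by
    rw [hr0, hq0]
    conv_lhs => rw [← Polynomial.modByMonic_add_div ((MvPolynomial.finSuccEquiv F 2) f) M]
    ring
  have hr0deg : r0.natDegree ≤ 2 := by
    by_cases h0 : r0 = 0
    · simp [h0]
    · have hlt := Polynomial.degree_modByMonic_lt ((MvPolynomial.finSuccEquiv F 2) f) hMonic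
      rw [hMdeg] at hlt
      have h3' : r0.degree < ((3 : ℕ) : WithBot ℕ) := by exact_mod_cast hlt
      have := (Polynomial.natDegree_lt_iff_degree_lt h0).mpr h3'
      omega
  set R0 : MvPolynomial (Fin 3) F := (MvPolynomial.finSuccEquiv F 2).symm r0 with hR0
  set G0 : MvPolynomial (Fin 3) F := -((MvPolynomial.finSuccEquiv F 2).symm q0) with hG0
  have hid : f = W.polynomial * G0 + R0 := by
    apply (MvPolynomial.finSuccEquiv F 2).injective
    rw [map_add, map_mul, hR0, hG0, map_neg, AlgEquiv.apply_symm_apply,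
      AlgEquiv.apply_symm_apply, hdiv, hMdef]
    ring
  have hR0deg : MvPolynomial.degreeOf 0 R0 ≤ 2 := by
    rw [← MvPolynomial.natDegree_finSuccEquiv, hR0, AlgEquiv.apply_symm_apply]
    exact hr0deg
  -- homogeneous components
  have hWH : W.polynomial.IsHomogeneous 3 := Wpoly_homog W
  set Rem : MvPolynomial (Fin 3) F := MvPolynomial.homogeneousComponent n' R0 with hRem
  have hfhc : MvPolynomial.homogeneousComponent n' f = f := by
    rw [MvPolynomial.homogeneousComponent_of_mem
      ((MvPolynomial.mem_homogeneousSubmodule _ _).mpr hf), if_pos rfl]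
  obtain ⟨G, hkey⟩ : ∃ G, f = W.polynomial * G + Rem := by
    rcases le_or_gt 3 n' with h3 | h3
    · refine ⟨MvPolynomial.homogeneousComponent (n' - 3) G0, ?_⟩
      have hmul := hc_mul hWH (v := G0) (n' - 3)
      have h33 : 3 + (n' - 3) = n' := by omega
      rw [h33] at hmul
      conv_lhs => rw [← hfhc, hid, map_add]
      rw [hmul, hRem]
    · refine ⟨0, ?_⟩
      have hz := hc_mul_lt hWH (v := G0) h3
      conv_lhs => rw [← hfhc, hid, map_add]
      rw [hz, hRem, mul_zero, zero_add]
  have hRemH : Rem.IsHomogeneous n' := MvPolynomial.homogeneousComponent_isHomogeneous n' R0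
  have hRemdeg : MvPolynomial.degreeOf 0 Rem ≤ 2 := by
    rw [MvPolynomial.degreeOf_le_iff]
    intro d hd
    have hd' : d ∈ R0.support := by
      rw [MvPolynomial.mem_support_iff] at hd ⊢
      intro h0
      apply hd
      rw [hRem, MvPolynomial.coeff_homogeneousComponent, h0, ite_self]
    exact MvPolynomial.degreeOf_le_iff.mp hR0deg d hd'
  -- vanishing of Rem at all representatives
  have hvanRem : ∀ i, ∀ x : Fin 3 → F, (P i).point = ⟦x⟧ → MvPolynomial.eval x Rem = 0 := by
    intro i x hx
    have h1 := hvan i x hx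
    have hns : W.Nonsingular x := by
      have := (P i).nonsingular
      rw [hx] at this
      exact this
    have h2 : MvPolynomial.eval x W.polynomial = 0 := hns.left
    have h3 := congrArg (MvPolynomial.eval x) hkey
    rw [h1, map_add, map_mul, h2, zero_mul, zero_add] at h3
    exact h3.symm
  -- affine coordinates for nonzero points
  have haff : ∀ i : Fin (3 * n' + l), ∃ ab : F × F, P i ≠ 0 →
      (P i).point = ⟦![ab.1, ab.2, 1]⟧ := by
    intro i
    by_cases h0 : P i = 0
    · exact ⟨(0, 0), fun h => absurd h0 h⟩
    · obtain ⟨v, hv⟩ := Quotient.exists_rep (P i).point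
      have hns : W.Nonsingular v := by
        have := (P i).nonsingular
        rw [← hv] at this
        exact this
      by_cases hz : v 2 = 0
      · exfalso
        apply h0
        apply WeierstrassCurve.Projective.Point.ext
        show (P i).point = ⟦![0, 1, 0]⟧
        rw [← hv]
        exact Quotient.sound (equiv_zero_of_Z_eq_zero hns hz)
      · refine ⟨(v 0 / v 2, v 1 / v 2), fun _ => ?_⟩
        rw [← hv]
        exact Quotient.sound (equiv_some_of_Z_ne_zero hz)
  choose ab hab using haff
  set A : Finset (Fin (3 * n' + l)) := Finset.univ.filter (fun i => ¬P i = 0) with hA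
  set S : Finset (F × F) := A.image ab with hS
  have hinj : Set.InjOn ab (A : Set (Fin (3 * n' + l))) := by
    intro i hi j hj hij
    have hi' : P i ≠ 0 := (Finset.mem_filter.mp (Finset.mem_coe.mp hi)).2
    have hj' : P j ≠ 0 := (Finset.mem_filter.mp (Finset.mem_coe.mp hj)).2
    apply hP
    apply WeierstrassCurve.Projective.Point.ext
    rw [hab i hi', hab j hj', hij]
  have hScard : S.card = A.card := Finset.card_image_of_injOn hinj
  have hAcard : 3 * n' + l - 1 ≤ A.card := by
    have h1 : (Finset.univ.filter (fun i => P i = 0)).card ≤ 1 := by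
      refine Finset.card_le_one.mpr fun a ha b hb => ?_
      have ha' := (Finset.mem_filter.mp ha).2
      have hb' := (Finset.mem_filter.mp hb).2
      exact hP (ha'.trans hb'.symm)
    have h2 := Finset.card_filter_add_card_filter_not
      (s := (Finset.univ : Finset (Fin (3 * n' + l)))) (p := fun i => P i = 0)
    rw [Finset.card_univ, Fintype.card_fin] at h2
    rw [hA]
    omega
  -- the weighted degree bound
  obtain ⟨m, hwb, hm⟩ : ∃ m, (∀ j, (phi Rem).coeff j ≠ 0 →
      3 * j + 2 * ((phi Rem).coeff j).natDegree ≤ m) ∧ m < S.card := by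
    by_cases h0 : ∃ i, P i = 0
    · obtain ⟨i0, hi0⟩ := h0
      refine ⟨3 * n' - 1, wb_phi Rem _ ?_, ?_⟩
      · intro d hd
        have hdd := support_degree_eq hRemH hd
        have hne : d ≠ Finsupp.single 1 n' := by
          intro hds
          have hvO : MvPolynomial.eval ![(0 : F), 1, 0] Rem = 0 := by
            apply hvanRem i0
            rw [hi0]
            rfl
          have hcz := coeff_single_eq_eval hRemH hvO
          rw [← hds] at hcz
          exact MvPolynomial.mem_support_iff.mp hd hcz
        have hor : d 0 ≠ 0 ∨ d 2 ≠ 0 := by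
          by_contra hcon
          push_neg at hcon
          apply hne
          ext j
          fin_cases j
          · simp [hcon.1, Finsupp.single_apply]
          · have : d 1 = n' := by omega
            simp only [Finsupp.single_apply]
            norm_num
            exact this
          · simp [hcon.2, Finsupp.single_apply]
        omega
      · rw [hScard]; omega
    · push_neg at h0
      refine ⟨3 * n', wb_phi Rem _ ?_, ?_⟩
      · intro d hd
        have := support_degree_eq hRemH hd
        omega
      · have hAu : A = Finset.univ := by
          rw [hA]
          exact Finset.filter_true_of_mem fun i _ => h0 i
        rw [hScard, hAu, Finset.card_univ, Fintype.card_fin]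
        omega
  -- apply the counting core
  have hSgood : ∀ r ∈ S, V.Equation r.1 r.2 ∧ (phi Rem).evalEval r.1 r.2 = 0 := by
    intro r hr
    obtain ⟨i, hiA, hir⟩ := Finset.mem_image.mp hr
    have hiP : P i ≠ 0 := (Finset.mem_filter.mp hiA).2
    have hpt := hab i hiP
    constructor
    · have hns := (P i).nonsingular
      rw [hpt] at hns
      have hns' := (nonsingularLift_some (ab i).1 (ab i).2).mp hns
      rw [← hir]
      exact hns'.left
    · rw [eval_phi, ← hir]
      exact hvanRem i _ hpt
  have hdvdphi : V.polynomial ∣ phi Rem := core V m (phi Rem) hwb S hSgood hm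
  obtain ⟨u, hu⟩ := hdvdphi
  have hu0 : u = 0 := by
    apply bounded_factor_zero V u
    intro j
    rw [← hu]
    exact coeff_phi_natDegree Rem 2 hRemdeg j
  have hphi0 : phi Rem = 0 := by rw [hu, hu0, mul_zero]
  have hRem0 : Rem = 0 := phi_inj_homog hRemH hphi0
  exact ⟨G, by rw [hkey, hRem0, add_zero]⟩
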